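/- Let n ≥ 2, let p' = (p'_1,…,p'_n) ∈ [0,1]^n, let 1 ≤ l < m ≤ n, and let u = e_l − e_m be the vector with 1 in coordinate l, −1 in coordinate m, and 0 elsewhere. Then the function t ↦ H(Z_{p' + t·u}) is strictly concave on the open interval of t for which all coordinates of p' + t·u lie strictly between 0 and 1. -/

import Mathlib

open Finset

/-- `b(k,p)`: the Poisson–binomial probability mass function. -/
noncomputable def pbin (n : ℕ) (p : Fin n → ℝ) (k : ℤ) : ℝ :=
  ∑ A ∈ Finset.univ.powerset.filter (fun A : Finset (Fin n) => (A.card : ℤ) = k),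
    (∏ i ∈ A, p i) * ∏ j ∈ Aᶜ, (1 - p j)

/-- Shannon entropy (base 2) of the Poisson–binomial distribution. -/
noncomputable def pbinEnt (n : ℕ) (p : Fin n → ℝ) : ℝ :=
  -∑ k ∈ Finset.range (n + 1), pbin n p k * Real.logb 2 (pbin n p k)

variable {n : ℕ}

/-- Poisson binomial pmf over an index finset. -/
noncomputable def pbF (s : Finset (Fin n)) (p : Fin n → ℝ) (k : ℤ) : ℝ :=
  ∑ A ∈ s.powerset.filter (fun A : Finset (Fin n) => (A.card : ℤ) = k),
    (∏ i ∈ A, p i) * ∏ j ∈ s \ A, (1 - p j)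

theorem pbF_empty (p : Fin n → ℝ) (k : ℤ) :
    pbF ∅ p k = if k = 0 then 1 else 0 := by
  unfold pbF
  by_cases h : k = 0 <;> simp [h, filter_singleton, eq_comm]

theorem pbF_congr {s : Finset (Fin n)} {p q : Fin n → ℝ} (h : ∀ i ∈ s, p i = q i) (k : ℤ) :
    pbF s p k = pbF s q k := by
  unfold pbF
  refine Finset.sum_congr rfl fun A hA => ?_
  simp only [mem_filter, mem_powerset] at hA
  refine congrArg₂ _ (Finset.prod_congr rfl fun i hi => h i (hA.1 hi))
    (Finset.prod_congr rfl fun j hj => by rw [h j (mem_sdiff.mp hj).1])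

theorem pbF_insert {s : Finset (Fin n)} {a : Fin n} (ha : a ∉ s) (p : Fin n → ℝ) (k : ℤ) :
    pbF (insert a s) p k = (1 - p a) * pbF s p k + p a * pbF s p (k - 1) := by
  unfold pbF
  rw [powerset_insert, filter_union, sum_union]
  · congr 1
    · rw [mul_sum]
      refine Finset.sum_congr rfl fun A hA => ?_
      simp only [mem_filter, mem_powerset] at hA
      have haA : a ∉ A := fun h => ha (hA.1 h)
      rw [insert_sdiff_of_notMem _ haA,
        prod_insert (show a ∉ s \ A from fun h => ha (mem_sdiff.mp h).1)]
      ring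
    · rw [mul_sum, filter_image]
      have hfc : s.powerset.filter (fun A => ((insert a A).card : ℤ) = k)
          = s.powerset.filter (fun A => (A.card : ℤ) = k - 1) := by
        refine filter_congr fun A hA => ?_
        have haA : a ∉ A := fun h => ha (mem_powerset.mp hA h)
        rw [card_insert_of_notMem haA]
        push_cast; constructor <;> intro h <;> omega
      rw [hfc, Finset.sum_image]
      · refine Finset.sum_congr rfl fun A hA => ?_
        simp only [mem_filter, mem_powerset] at hA
        have haA : a ∉ A := fun h => ha (hA.1 h)
        have h1 : insert a s \ insert a A = s \ A := by
          ext x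
          simp only [mem_sdiff, mem_insert, not_or]
          constructor
          · rintro ⟨h2 | h2, h3, h4⟩
            · exact absurd h2 h3
            · exact ⟨h2, h4⟩
          · rintro ⟨h2, h3⟩
            exact ⟨Or.inr h2, fun h => ha (h ▸ h2), h3⟩
        rw [h1, prod_insert haA]
        ring
      · intro A hA B hB hAB
        have haA : a ∉ A := fun h => ha (mem_powerset.mp (mem_filter.mp hA).1 h)
        have haB : a ∉ B := fun h => ha (mem_powerset.mp (mem_filter.mp hB).1 h)
        rw [← erase_insert haA, ← erase_insert haB, hAB]
  · rw [disjoint_left]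
    intro A hA hA'
    have h1 : a ∉ A := fun h => ha (mem_powerset.mp (mem_filter.mp hA).1 h)
    obtain ⟨B, _, rfl⟩ := mem_image.mp (mem_filter.mp hA').1
    exact h1 (mem_insert_self a B)

theorem pbF_eq_zero {s : Finset (Fin n)} (p : Fin n → ℝ) {k : ℤ}
    (h : k < 0 ∨ (s.card : ℤ) < k) : pbF s p k = 0 := by
  unfold pbF
  refine Finset.sum_eq_zero fun A hA => ?_
  simp only [mem_filter, mem_powerset] at hA
  have := card_le_card hA.1
  exfalso; omega

theorem pbF_nonneg {s : Finset (Fin n)} {p : Fin n → ℝ}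
    (hp : ∀ i ∈ s, 0 ≤ p i ∧ p i ≤ 1) (k : ℤ) : 0 ≤ pbF s p k := by
  unfold pbF
  refine Finset.sum_nonneg fun A hA => ?_
  simp only [mem_filter, mem_powerset] at hA
  refine mul_nonneg (Finset.prod_nonneg fun i hi => (hp i (hA.1 hi)).1)
    (Finset.prod_nonneg fun j hj => by
      have := (hp j (mem_sdiff.mp hj).1).2; linarith)

theorem pbF_pos {s : Finset (Fin n)} {p : Fin n → ℝ}
    (hp : ∀ i ∈ s, 0 < p i ∧ p i < 1) :
    ∀ k : ℤ, 0 ≤ k → k ≤ (s.card : ℤ) → 0 < pbF s p k := by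
  classical
  induction s using Finset.induction_on with
  | empty =>
    intro k h1 h2
    simp only [card_empty, Nat.cast_zero] at h2
    have : k = 0 := le_antisymm h2 h1
    rw [this, pbF_empty]; norm_num
  | @insert a s ha IH =>
    intro k h1 h2
    have hpa := hp a (mem_insert_self a s)
    have hps : ∀ i ∈ s, 0 < p i ∧ p i < 1 := fun i hi => hp i (mem_insert_of_mem hi)
    have hps' : ∀ i ∈ s, 0 ≤ p i ∧ p i ≤ 1 := fun i hi => ⟨(hps i hi).1.le, (hps i hi).2.le⟩
    rw [card_insert_of_notMem ha] at h2
    have h2' : k ≤ (s.card : ℤ) + 1 := by push_cast at h2; omega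
    rw [pbF_insert ha]
    by_cases hk : k ≤ (s.card : ℤ)
    · have t1 : 0 < (1 - p a) * pbF s p k :=
        mul_pos (by linarith [hpa.2]) (IH hps k h1 hk)
      have t2 : 0 ≤ p a * pbF s p (k - 1) :=
        mul_nonneg hpa.1.le (pbF_nonneg hps' _)
      linarith
    · have t2 : 0 < p a * pbF s p (k - 1) :=
        mul_pos hpa.1 (IH hps (k-1) (by omega) (by omega))
      have t1 : 0 ≤ (1 - p a) * pbF s p k :=
        mul_nonneg (by linarith [hpa.2]) (pbF_nonneg hps' _)
      linarith

theorem pbF_newton {s : Finset (Fin n)} {p : Fin n → ℝ}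
    (hp : ∀ i ∈ s, 0 < p i ∧ p i < 1) :
    (∀ k : ℤ, pbF s p (k-1) * pbF s p (k+1) ≤ pbF s p k ^ 2) ∧
    (∀ k : ℤ, 1 ≤ k → k ≤ (s.card : ℤ) → pbF s p (k-1) * pbF s p (k+1) < pbF s p k ^ 2) := by
  classical
  induction s using Finset.induction_on with
  | empty =>
    constructor
    · intro k
      rw [pbF_empty, pbF_empty, pbF_empty]
      split_ifs <;> first | (exfalso; omega) | norm_num
    · intro k h1 h2
      have h0 : (#(∅ : Finset (Fin n)) : ℤ) = 0 := by simp
      omega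
  | @insert a s ha IH =>
    have hpa := hp a (mem_insert_self a s)
    have hps : ∀ i ∈ s, 0 < p i ∧ p i < 1 := fun i hi => hp i (mem_insert_of_mem hi)
    have hps' : ∀ i ∈ s, 0 ≤ p i ∧ p i ≤ 1 := fun i hi => ⟨(hps i hi).1.le, (hps i hi).2.le⟩
    obtain ⟨IHw, IHs⟩ := IH hps
    set q := p a with hq
    set b := pbF s p with hb
    have E : ∀ j : ℤ, pbF (insert a s) p j = (1-q) * b j + q * b (j-1) := fun j => by
      rw [pbF_insert ha]
    have key : ∀ k : ℤ, pbF (insert a s) p k ^ 2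
        - pbF (insert a s) p (k-1) * pbF (insert a s) p (k+1)
        = (1-q)^2 * (b k ^2 - b (k-1) * b (k+1)) + q^2 * (b (k-1) ^2 - b (k-2) * b k)
          + q * (1-q) * (b (k-1) * b k - b (k-2) * b (k+1)) := by
      intro k
      rw [E k, E (k-1), E (k+1)]
      have h1 : k + 1 - 1 = k := by ring
      have h2 : k - 1 - 1 = k - 2 := by ring
      rw [h1, h2]; ring
    have cross : ∀ k : ℤ, b (k-2) * b (k+1) ≤ b (k-1) * b k := by
      intro k
      by_cases h2 : 0 ≤ k - 2 ∧ k + 1 ≤ (s.card : ℤ)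
      · have p0 : 0 < b (k-2) := pbF_pos hps _ h2.1 (by omega)
        have p1 : 0 < b (k-1) := pbF_pos hps _ (by omega) (by omega)
        have p2 : 0 < b k := pbF_pos hps _ (by omega) (by omega)
        have p3 : 0 < b (k+1) := pbF_pos hps _ (by omega) h2.2
        have w1 := IHw (k-1)
        have w2 := IHw k
        have h3 : k - 1 - 1 = k - 2 := by ring
        have h4 : k - 1 + 1 = k := by ring
        rw [h3, h4] at w1
        nlinarith
      · have h0 : b (k-2) = 0 ∨ b (k+1) = 0 := by
          rcases not_and_or.mp h2 with h | h
          · exact Or.inl (pbF_eq_zero p (Or.inl (by omega)))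
          · exact Or.inr (pbF_eq_zero p (Or.inr (by omega)))
        have hn1 : 0 ≤ b (k-1) := pbF_nonneg hps' _
        have hn2 : 0 ≤ b k := pbF_nonneg hps' _
        have hn3 : 0 ≤ b (k-2) := pbF_nonneg hps' _
        have hn4 : 0 ≤ b (k+1) := pbF_nonneg hps' _
        rcases h0 with h | h <;> rw [h] <;> nlinarith
    have P2w : ∀ k : ℤ, b (k-2) * b k ≤ b (k-1) ^ 2 := by
      intro k
      have w2 := IHw (k-1)
      have h3 : k - 1 - 1 = k - 2 := by ring
      have h4 : k - 1 + 1 = k := by ring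
      rw [h3, h4] at w2; exact w2
    have weak : ∀ k : ℤ, pbF (insert a s) p (k-1) * pbF (insert a s) p (k+1)
        ≤ pbF (insert a s) p k ^ 2 := by
      intro k
      have hk := key k
      have w1 := IHw k
      have w2 := P2w k
      have c := cross k
      nlinarith [sq_nonneg (1-q), sq_nonneg q, hpa.1, hpa.2,
        mul_nonneg (mul_nonneg hpa.1.le (by linarith [hpa.2] : (0:ℝ) ≤ 1 - q))
          (by linarith : (0:ℝ) ≤ b (k-1) * b k - b (k-2) * b (k+1))]
    refine ⟨weak, ?_⟩
    intro k h1 h2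
    rw [card_insert_of_notMem ha] at h2
    have h2' : k ≤ (s.card : ℤ) + 1 := by push_cast at h2; omega
    have hk := key k
    have w1 := IHw k
    have w2 := P2w k
    have c := cross k
    have hq1 : 0 < q := hpa.1
    have hq2 : q < 1 := hpa.2
    by_cases hks : k ≤ (s.card : ℤ)
    · -- first piece strictly positive
      have first : b (k-1) * b (k+1) < b k ^ 2 := IHs k h1 hks
      nlinarith [mul_pos (mul_pos hq1 (by linarith : (0:ℝ) < 1 - q))
          (by linarith : (0:ℝ) < 1), sq_nonneg q,
        mul_pos (mul_pos (by linarith : (0:ℝ) < 1 - q) (by linarith : (0:ℝ) < 1 - q))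
          (by linarith : (0:ℝ) < b k ^ 2 - b (k-1) * b (k+1)),
        mul_nonneg (sq_nonneg q) (by linarith : (0:ℝ) ≤ b (k-1)^2 - b (k-2) * b k),
        mul_nonneg (mul_nonneg hq1.le (by linarith : (0:ℝ) ≤ 1 - q))
          (by linarith : (0:ℝ) ≤ b (k-1) * b k - b (k-2) * b (k+1))]
    · -- k = card s + 1 : second piece strictly positive
      have hkeq : k = (s.card : ℤ) + 1 := by omega
      have hz : b k = 0 := pbF_eq_zero p (Or.inr (by omega))
      have hpk : 0 < b (k-1) := pbF_pos hps _ (by omega) (by omega)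
      have second : b (k-2) * b k < b (k-1) ^ 2 := by rw [hz]; nlinarith
      nlinarith [mul_pos (pow_pos hq1 2)
          (by linarith : (0:ℝ) < b (k-1) ^2 - b (k-2) * b k),
        mul_nonneg (sq_nonneg (1-q)) (by linarith : (0:ℝ) ≤ b k ^2 - b (k-1) * b (k+1)),
        mul_nonneg (mul_nonneg hq1.le (by linarith : (0:ℝ) ≤ 1 - q))
          (by linarith : (0:ℝ) ≤ b (k-1) * b k - b (k-2) * b (k+1))]

theorem sum_shift (N : ℕ) (B L : ℤ → ℝ) (hB0 : ∀ j : ℤ, j < 0 → B j = 0)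
    (hBN : ∀ j : ℤ, (N : ℤ) < j → B j = 0) :
    ∑ k ∈ Finset.range (N+3), (B k - 2 * B ((k:ℤ)-1) + B ((k:ℤ)-2)) * L k
      = ∑ j ∈ Finset.range (N+1), B j * (L j - 2 * L ((j:ℤ)+1) + L ((j:ℤ)+2)) := by
  have expand : ∑ k ∈ Finset.range (N+3), (B k - 2 * B ((k:ℤ)-1) + B ((k:ℤ)-2)) * L k
      = ∑ k ∈ Finset.range (N+3), B k * L k
        - 2 * ∑ k ∈ Finset.range (N+3), B ((k:ℤ)-1) * L k
        + ∑ k ∈ Finset.range (N+3), B ((k:ℤ)-2) * L k := by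
    rw [Finset.mul_sum, ← Finset.sum_sub_distrib, ← Finset.sum_add_distrib]
    exact Finset.sum_congr rfl fun k _ => by ring
  have S0 : ∑ k ∈ Finset.range (N+3), B k * L k
      = ∑ j ∈ Finset.range (N+1), B j * L j := by
    have e1 : N + 3 = (N + 2) + 1 := by ring
    rw [e1, Finset.sum_range_succ, show N + 2 = (N + 1) + 1 from by ring,
      Finset.sum_range_succ]
    rw [hBN _ (by push_cast; omega), hBN _ (by push_cast; omega)]
    ring
  have S1 : ∑ k ∈ Finset.range (N+3), B ((k:ℤ)-1) * L k
      = ∑ j ∈ Finset.range (N+1), B j * L ((j:ℤ)+1) := by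
    rw [show N + 3 = (N + 2) + 1 from by ring, Finset.sum_range_succ']
    have e2 : ∀ k : ℕ, B ((((k+1):ℕ):ℤ)-1) * L (((k+1):ℕ):ℤ) = B k * L ((k:ℤ)+1) := by
      intro k
      have : ((((k+1):ℕ)):ℤ) - 1 = (k:ℤ) := by push_cast; ring
      rw [this]
      norm_cast
    rw [Finset.sum_congr rfl fun k _ => e2 k, hB0 _ (by norm_num),
      show N + 2 = (N + 1) + 1 from by ring, Finset.sum_range_succ,
      hBN _ (by push_cast; omega)]
    ring
  have S2 : ∑ k ∈ Finset.range (N+3), B ((k:ℤ)-2) * L k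
      = ∑ j ∈ Finset.range (N+1), B j * L ((j:ℤ)+2) := by
    rw [show N + 3 = (N + 2) + 1 from by ring, Finset.sum_range_succ',
      show N + 2 = (N + 1) + 1 from by ring, Finset.sum_range_succ']
    have e2 : ∀ k : ℕ, B ((((k+1+1):ℕ):ℤ)-2) * L (((k+1+1):ℕ):ℤ) = B k * L ((k:ℤ)+2) := by
      intro k
      have h3 : ((((k+1+1):ℕ)):ℤ) - 2 = (k:ℤ) := by push_cast; ring
      rw [h3]
      norm_cast
    rw [Finset.sum_congr rfl fun k _ => e2 k,
      hB0 (((0:ℕ):ℤ) - 2) (by norm_num), hB0 ((((0+1):ℕ):ℤ) - 2) (by norm_num)]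
    ring
  rw [expand, S0, S1, S2, Finset.mul_sum, ← Finset.sum_sub_distrib, ← Finset.sum_add_distrib]
  exact Finset.sum_congr rfl fun j _ => by ring

theorem pbin_eq_pbF (n : ℕ) (p : Fin n → ℝ) (k : ℤ) : pbin n p k = pbF univ p k := by
  unfold pbin pbF
  exact Finset.sum_congr rfl fun A hA => by rw [Finset.compl_eq_univ_sdiff]

theorem pbin_expand {n : ℕ} {l m : Fin n} (hlm : l ≠ m) (q : Fin n → ℝ) (k : ℤ) :
    pbin n q k
      = (1 - q l) * ((1 - q m) * pbF (({l,m} : Finset (Fin n))ᶜ) q k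
          + q m * pbF (({l,m} : Finset (Fin n))ᶜ) q (k-1))
        + q l * ((1 - q m) * pbF (({l,m} : Finset (Fin n))ᶜ) q (k-1)
          + q m * pbF (({l,m} : Finset (Fin n))ᶜ) q (k-2)) := by
  have hm : m ∉ (({l,m} : Finset (Fin n))ᶜ) := by simp
  have hl : l ∉ insert m (({l,m} : Finset (Fin n))ᶜ) := by simp [hlm]
  have huniv : insert l (insert m (({l,m} : Finset (Fin n))ᶜ)) = univ := by
    ext i
    simp only [mem_insert, mem_compl, mem_singleton, mem_univ, iff_true]
    by_cases h1 : i = l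
    · exact Or.inl h1
    · by_cases h2 : i = m
      · exact Or.inr (Or.inl h2)
      · exact Or.inr (Or.inr (by simp [h1, h2]))
  rw [pbin_eq_pbF, ← huniv, pbF_insert hl, pbF_insert hm, pbF_insert hm,
    show k - 1 - 1 = k - 2 from by ring]

noncomputable def BBf {n : ℕ} (l m : Fin n) (p' : Fin n → ℝ) (j : ℤ) : ℝ :=
  pbF (({l,m} : Finset (Fin n))ᶜ) p' j

noncomputable def ccf {n : ℕ} (l m : Fin n) (p' : Fin n → ℝ) (k : ℤ) : ℝ :=
  BBf l m p' k - 2 * BBf l m p' (k-1) + BBf l m p' (k-2)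

noncomputable def bbf {n : ℕ} (l m : Fin n) (p' : Fin n → ℝ) (k : ℤ) (t : ℝ) : ℝ :=
  ((1 - (p' l + p' m)) * BBf l m p' k + (p' l + p' m) * BBf l m p' (k-1))
    + ccf l m p' k * ((p' l + t) * (p' m - t))

theorem pbin_line {n : ℕ} {l m : Fin n} (hlm : l ≠ m) (p' : Fin n → ℝ) (t : ℝ) (k : ℤ) :
    pbin n (fun i => p' i + t * (if i = l then 1 else if i = m then -1 else 0)) k
      = bbf l m p' k t := by
  rw [pbin_expand hlm]
  have h3 : ∀ j : ℤ, pbF (({l,m} : Finset (Fin n))ᶜ)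
      (fun i => p' i + t * (if i = l then 1 else if i = m then -1 else 0)) j
      = BBf l m p' j := by
    intro j
    refine pbF_congr (fun i hi => ?_) j
    simp only [mem_compl, mem_insert, mem_singleton, not_or] at hi
    simp [hi.1, hi.2]
  rw [h3, h3, h3]
  simp only [↓reduceIte, if_neg (Ne.symm hlm)]
  unfold bbf ccf
  ring

theorem bbf_hasDeriv {n : ℕ} (l m : Fin n) (p' : Fin n → ℝ) (k : ℤ) (t : ℝ) :
    HasDerivAt (fun t => bbf l m p' k t) (ccf l m p' k * (p' m - p' l - 2*t)) t := by
  have ha : HasDerivAt (fun t : ℝ => p' l + t) 1 t := (hasDerivAt_id t).const_add (p' l)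
  have hb : HasDerivAt (fun t : ℝ => p' m - t) (-1) t := (hasDerivAt_id t).const_sub (p' m)
  have h1 : HasDerivAt (fun t : ℝ => (p' l + t) * (p' m - t)) (p' m - p' l - 2*t) t := by
    have : HasDerivAt (fun t : ℝ => (p' l + t) * (p' m - t)) (1 * (p' m - t) + (p' l + t) * -1) t := ha.fun_mul hb
    convert this using 1
    ring
  have := (h1.const_mul (ccf l m p' k)).const_add
    ((1 - (p' l + p' m)) * BBf l m p' k + (p' l + p' m) * BBf l m p' (k-1))
  exact this

theorem term_hasDeriv {n : ℕ} (l m : Fin n) (p' : Fin n → ℝ) (k : ℤ) (t : ℝ)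
    (h : bbf l m p' k t ≠ 0) :
    HasDerivAt (fun t => bbf l m p' k t * Real.log (bbf l m p' k t))
      ((Real.log (bbf l m p' k t) + 1) * (ccf l m p' k * (p' m - p' l - 2*t))) t :=
  (Real.hasDerivAt_mul_log h).comp t (bbf_hasDeriv l m p' k t)

theorem term2_hasDeriv {n : ℕ} (l m : Fin n) (p' : Fin n → ℝ) (k : ℤ) (t : ℝ)
    (h : bbf l m p' k t ≠ 0) :
    HasDerivAt (fun t => (Real.log (bbf l m p' k t) + 1) * (ccf l m p' k * (p' m - p' l - 2*t)))
      ((ccf l m p' k * (p' m - p' l - 2*t) / bbf l m p' k t)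
          * (ccf l m p' k * (p' m - p' l - 2*t))
        + (Real.log (bbf l m p' k t) + 1) * (ccf l m p' k * (-2))) t := by
  have hlog : HasDerivAt (fun t => Real.log (bbf l m p' k t) + 1)
      (ccf l m p' k * (p' m - p' l - 2*t) / bbf l m p' k t) t :=
    ((bbf_hasDeriv l m p' k t).log h).add_const 1
  have hv0 : HasDerivAt (fun t : ℝ => p' m - p' l - 2*t) (-2) t := by
    have h2 : HasDerivAt (fun t : ℝ => 2*t) 2 t := by
      simpa using (hasDerivAt_id t).const_mul (2:ℝ)
    simpa using h2.const_sub (p' m - p' l)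
  have hv : HasDerivAt (fun t : ℝ => ccf l m p' k * (p' m - p' l - 2*t))
      (ccf l m p' k * (-2)) t := hv0.const_mul _
  exact hlog.mul hv

/-- The entropy `H(Z_p)` restricted to the line `p = p' + t·(e_l − e_m)` is
strictly concave on the open interval of parameters `t` for which all
coordinates lie strictly between `0` and `1`. -/
theorem entropy_strictConcaveOn_line (n : ℕ) (hn : 2 ≤ n) (p' : Fin n → ℝ)
    (hp' : ∀ i, p' i ∈ Set.Icc (0 : ℝ) 1) (l m : Fin n) (hlm : l < m)
    (u : Fin n → ℝ) (hu : u = fun i => if i = l then 1 else if i = m then -1 else 0) :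
    StrictConcaveOn ℝ {t : ℝ | ∀ i, 0 < p' i + t * u i ∧ p' i + t * u i < 1}
      (fun t => pbinEnt n (fun i => p' i + t * u i)) := by
  have hlm' : l ≠ m := ne_of_lt hlm
  obtain ⟨N, rfl⟩ : ∃ N, n = N + 2 := ⟨n - 2, by omega⟩
  simp only [hu]
  set D : Set ℝ := {t : ℝ | ∀ i : Fin (N+2),
      0 < p' i + t * (if i = l then (1:ℝ) else if i = m then -1 else 0) ∧
      p' i + t * (if i = l then (1:ℝ) else if i = m then -1 else 0) < 1} with hDdef
  -- basic facts about the coordinate set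
  have hcard2 : ({l, m} : Finset (Fin (N+2))).card = 2 := card_pair hlm'
  have hcardrest : ((({l,m} : Finset (Fin (N+2)))ᶜ).card : ℤ) = N := by
    rw [card_compl, hcard2]
    simp [Fintype.card_fin]
  have hB0 : ∀ j : ℤ, j < 0 → BBf l m p' j = 0 := fun j hj => pbF_eq_zero p' (Or.inl hj)
  have hBN : ∀ j : ℤ, (N:ℤ) < j → BBf l m p' j = 0 := fun j hj =>
    pbF_eq_zero p' (Or.inr (by rw [hcardrest]; exact hj))
  have hkey : ∀ (t : ℝ) (k : ℤ),
      pbin (N+2) (fun i => p' i + t * (if i = l then (1:ℝ) else if i = m then -1 else 0)) k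
        = bbf l m p' k t := fun t k => pbin_line hlm' p' t k
  have hcarduniv : ((univ : Finset (Fin (N+2))).card : ℤ) = (N:ℤ) + 2 := by
    simp [Fintype.card_fin]
  -- positivity of the full pmf at points of D
  have hqmem : ∀ t ∈ D, ∀ i, 0 < p' i + t * (if i = l then (1:ℝ) else if i = m then -1 else 0)
      ∧ p' i + t * (if i = l then (1:ℝ) else if i = m then -1 else 0) < 1 := by
    intro t ht i; exact ht i
  have hpos : ∀ t ∈ D, ∀ k : ℤ, 0 ≤ k → k ≤ (N:ℤ) + 2 → 0 < bbf l m p' k t := by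
    intro t ht k hk1 hk2
    rw [← hkey t k, pbin_eq_pbF]
    exact pbF_pos (fun i _ => hqmem t ht i) k hk1 (by rw [hcarduniv]; exact hk2)
  -- the entropy function in explicit form
  set F : ℝ → ℝ := fun t => -(Real.log 2)⁻¹ *
      ∑ k ∈ Finset.range (N+3), bbf l m p' (k:ℤ) t * Real.log (bbf l m p' (k:ℤ) t) with hFdef
  have hEnt : (fun t : ℝ => pbinEnt (N+2)
      (fun i => p' i + t * (if i = l then (1:ℝ) else if i = m then -1 else 0))) = F := by
    funext t
    show -∑ k ∈ Finset.range (N+2+1), _ = _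
    rw [hFdef]
    have e1 : ∀ k : ℕ, pbin (N+2) (fun i => p' i + t * (if i = l then (1:ℝ) else if i = m then -1 else 0)) (k:ℤ)
        * Real.logb 2 (pbin (N+2) (fun i => p' i + t * (if i = l then (1:ℝ) else if i = m then -1 else 0)) (k:ℤ))
        = (bbf l m p' (k:ℤ) t * Real.log (bbf l m p' (k:ℤ) t)) * (Real.log 2)⁻¹ := by
      intro k
      rw [hkey, ← Real.log_div_log]
      ring
    rw [Finset.sum_congr rfl fun k _ => e1 k, ← Finset.sum_mul]
    ring
  rw [hEnt]
  -- derivative data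
  set G : ℝ → ℝ := fun t => -(Real.log 2)⁻¹ *
      ∑ k ∈ Finset.range (N+3), (Real.log (bbf l m p' (k:ℤ) t) + 1)
        * (ccf l m p' (k:ℤ) * (p' m - p' l - 2*t)) with hGdef
  set W : ℝ → ℝ := fun t => -(Real.log 2)⁻¹ *
      ∑ k ∈ Finset.range (N+3), ((ccf l m p' (k:ℤ) * (p' m - p' l - 2*t) / bbf l m p' (k:ℤ) t)
          * (ccf l m p' (k:ℤ) * (p' m - p' l - 2*t))
        + (Real.log (bbf l m p' (k:ℤ) t) + 1) * (ccf l m p' (k:ℤ) * (-2))) with hWdef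
  have hposk : ∀ t ∈ D, ∀ k : ℕ, k ∈ Finset.range (N+3) → 0 < bbf l m p' (k:ℤ) t := by
    intro t ht k hk
    rw [Finset.mem_range] at hk
    exact hpos t ht k (by positivity) (by omega)
  have HF : ∀ t ∈ D, HasDerivAt F (G t) t := by
    intro t ht
    exact HasDerivAt.const_mul _
      (HasDerivAt.fun_sum fun k hk => term_hasDeriv l m p' k t (hposk t ht k hk).ne')
  have HG : ∀ t ∈ D, HasDerivAt G (W t) t := by
    intro t ht
    exact HasDerivAt.const_mul _
      (HasDerivAt.fun_sum fun k hk => term2_hasDeriv l m p' k t (hposk t ht k hk).ne')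
  -- openness of D
  have hDopen : IsOpen D := by
    have : D = ⋂ i : Fin (N+2),
        ((fun t => p' i + t * (if i = l then (1:ℝ) else if i = m then -1 else 0)) ⁻¹'
          Set.Ioo 0 1) := by
      ext t
      simp [hDdef, Set.mem_iInter, Set.mem_Ioo]
    rw [this]
    exact isOpen_iInter_of_finite fun i =>
      isOpen_Ioo.preimage (continuous_const.add (continuous_id.mul continuous_const))
  -- convexity of D
  have hDconv : Convex ℝ D := by
    intro t1 h1 t2 h2 α β hα hβ hab
    intro i
    have hmem := (convex_Ioo (0:ℝ) 1) (Set.mem_Ioo.mpr ⟨(h1 i).1, (h1 i).2⟩)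
      (Set.mem_Ioo.mpr ⟨(h2 i).1, (h2 i).2⟩) hα hβ hab
    simp only [smul_eq_mul, Set.mem_Ioo] at hmem
    have e : p' i + (α * t1 + β * t2) * (if i = l then (1:ℝ) else if i = m then -1 else 0)
        = α * (p' i + t1 * (if i = l then (1:ℝ) else if i = m then -1 else 0))
          + β * (p' i + t2 * (if i = l then (1:ℝ) else if i = m then -1 else 0)) := by
      linear_combination (p' i) * hab.symm
    simp only [smul_eq_mul]
    rw [e]
    exact ⟨hmem.1, hmem.2⟩
  -- continuity
  have hcont : ContinuousOn F D := fun t ht => (HF t ht).continuousAt.continuousWithinAt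
  refine strictConcaveOn_of_deriv2_neg hDconv hcont ?_
  intro t ht
  rw [hDopen.interior_eq] at ht
  have e2 : deriv F =ᶠ[nhds t] G :=
    Filter.eventuallyEq_of_mem (hDopen.mem_nhds ht) (fun y hy => (HF y hy).deriv)
  have hit : deriv^[2] F t = deriv (deriv F) t := by
    rw [Function.iterate_succ_apply', Function.iterate_one]
  rw [hit, e2.deriv_eq, (HG t ht).deriv]
  -- now show `W t < 0`
  rw [hWdef]
  have hlog2 : 0 < Real.log 2 := Real.log_pos one_lt_two
  set v : ℝ := p' m - p' l - 2*t with hv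
  have hsplit : ∑ k ∈ Finset.range (N+3), ((ccf l m p' (k:ℤ) * v / bbf l m p' (k:ℤ) t)
          * (ccf l m p' (k:ℤ) * v)
        + (Real.log (bbf l m p' (k:ℤ) t) + 1) * (ccf l m p' (k:ℤ) * (-2)))
      = (∑ k ∈ Finset.range (N+3), (ccf l m p' (k:ℤ) * v)^2 / bbf l m p' (k:ℤ) t)
        + (-2) * ∑ k ∈ Finset.range (N+3), (ccf l m p' (k:ℤ))
            * (Real.log (bbf l m p' (k:ℤ) t) + 1) := by
    rw [Finset.mul_sum, ← Finset.sum_add_distrib]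
    exact Finset.sum_congr rfl fun k _ => by ring
  have hS1 : 0 ≤ ∑ k ∈ Finset.range (N+3), (ccf l m p' (k:ℤ) * v)^2 / bbf l m p' (k:ℤ) t :=
    Finset.sum_nonneg fun k hk => div_nonneg (sq_nonneg _) (hposk t ht k hk).le
  -- the key strict inequality via log-concavity
  have hshift : ∑ k ∈ Finset.range (N+3), (ccf l m p' (k:ℤ))
        * (Real.log (bbf l m p' (k:ℤ) t) + 1)
      = ∑ j ∈ Finset.range (N+1), BBf l m p' (j:ℤ) *
          ((Real.log (bbf l m p' (j:ℤ) t) + 1) - 2 * (Real.log (bbf l m p' ((j:ℤ)+1) t) + 1)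
            + (Real.log (bbf l m p' ((j:ℤ)+2) t) + 1)) := by
    simp only [ccf]
    exact sum_shift N (BBf l m p') (fun j => Real.log (bbf l m p' j t) + 1) hB0 hBN
  have hbbeq : ∀ k : ℤ, pbF univ
      (fun i => p' i + t * (if i = l then (1:ℝ) else if i = m then -1 else 0)) k
      = bbf l m p' k t := fun k => by rw [← pbin_eq_pbF, hkey]
  have hterm : ∀ j ∈ Finset.range (N+1), BBf l m p' (j:ℤ) *
        ((Real.log (bbf l m p' (j:ℤ) t) + 1) - 2 * (Real.log (bbf l m p' ((j:ℤ)+1) t) + 1)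
          + (Real.log (bbf l m p' ((j:ℤ)+2) t) + 1)) < 0 := by
    intro j hj
    rw [Finset.mem_range] at hj
    -- positivity of B j : interior coordinates
    have hrest : ∀ i ∈ (({l,m} : Finset (Fin (N+2)))ᶜ), 0 < p' i ∧ p' i < 1 := by
      intro i hi
      simp only [mem_compl, mem_insert, mem_singleton, not_or] at hi
      have := hqmem t ht i
      rw [if_neg hi.1, if_neg hi.2] at this
      constructor <;> [linarith [this.1]; linarith [this.2]]
    have hBj : 0 < BBf l m p' (j:ℤ) :=
      pbF_pos hrest (j:ℤ) (by positivity) (by rw [hcardrest]; omega)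
    -- strict Newton inequality at j+1
    have hnewton := (pbF_newton (s := (univ : Finset (Fin (N+2))))
      (fun i _ => hqmem t ht i)).2 ((j:ℤ)+1) (by omega)
      (by rw [hcarduniv]; omega)
    rw [show (j:ℤ) + 1 - 1 = (j:ℤ) from by ring] at hnewton
    rw [hbbeq, hbbeq, hbbeq] at hnewton
    rw [show (j:ℤ) + 1 + 1 = (j:ℤ) + 2 from by ring] at hnewton
    have h0 : 0 < bbf l m p' (j:ℤ) t := hpos t ht _ (by positivity) (by omega)
    have h1 : 0 < bbf l m p' ((j:ℤ)+1) t := hpos t ht _ (by positivity) (by omega)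
    have h2 : 0 < bbf l m p' ((j:ℤ)+2) t := hpos t ht _ (by positivity) (by omega)
    have hloglt : Real.log (bbf l m p' (j:ℤ) t * bbf l m p' ((j:ℤ)+2) t)
        < Real.log (bbf l m p' ((j:ℤ)+1) t ^ 2) :=
      Real.log_lt_log (mul_pos h0 h2) hnewton
    rw [Real.log_mul h0.ne' h2.ne', Real.log_pow] at hloglt
    push_cast at hloglt
    apply mul_neg_of_pos_of_neg hBj
    nlinarith [hloglt]
  have hS2 : ∑ j ∈ Finset.range (N+1), BBf l m p' (j:ℤ) *
        ((Real.log (bbf l m p' (j:ℤ) t) + 1) - 2 * (Real.log (bbf l m p' ((j:ℤ)+1) t) + 1)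
          + (Real.log (bbf l m p' ((j:ℤ)+2) t) + 1)) < 0 := by
    have := Finset.sum_lt_sum_of_nonempty (Finset.nonempty_range_iff.mpr (Nat.succ_ne_zero N))
      hterm
    simpa using this
  have hSpos : 0 < ∑ k ∈ Finset.range (N+3), ((ccf l m p' (k:ℤ) * v / bbf l m p' (k:ℤ) t)
          * (ccf l m p' (k:ℤ) * v)
        + (Real.log (bbf l m p' (k:ℤ) t) + 1) * (ccf l m p' (k:ℤ) * (-2))) := by
    rw [hsplit, hshift]
    nlinarith [hS1, hS2]
  have : -(Real.log 2)⁻¹ < 0 := by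
    simp only [neg_neg, neg_lt, neg_zero]
    positivity
  exact mul_neg_of_neg_of_pos this hSpos
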